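/- GATE identification conditional on the key covariate and the propensity score (the displayed chain in Section 2.3): under unconfoundedness and strict overlap, with G = σ(g ∘ X, π ∘ X) the σ-algebra generated by (Z, π(X)), one has E[A | G] = π(X) almost surely and E[Y1 − Y0 | σ(Z)] = E[ E[A·Y | G]/E[A | G] − E[(1−A)·Y | G]/E[(1−A) | G] | σ(Z) ] almost surely; in particular τ(z) equals the σ(Z)-conditional average of the difference of arm-specific conditional means given (Z, π(X)). -/

import Mathlib

open MeasureTheory ProbabilityTheory

open MeasurableSpace in
lemma condIndep_condexp_mul
    {Ω : Type*} [mΩ : MeasurableSpace Ω] [StandardBorelSpace Ω]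
    (μ : Measure Ω) [IsProbabilityMeasure μ]
    {A B : Ω → ℝ} (hAm : Measurable A) (hA01 : ∀ ω, A ω = 0 ∨ A ω = 1)
    (hBm : Measurable B) (hBi : Integrable B μ)
    {S : Type*} [MeasurableSpace S] (X : Ω → S) (hXm : Measurable X)
    (h : CondIndepFun (MeasurableSpace.comap X inferInstance) hXm.comap_le A B μ) :
    μ[fun ω => A ω * B ω | MeasurableSpace.comap X inferInstance]
      =ᵐ[μ] fun ω => (μ[A|MeasurableSpace.comap X inferInstance]) ω
        * (μ[B|MeasurableSpace.comap X inferInstance]) ω := by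
  have hm : MeasurableSpace.comap X inferInstance ≤ mΩ := hXm.comap_le
  have hAb : ∀ ω, ‖A ω‖ ≤ 1 := by
    intro ω; rcases hA01 ω with h'|h' <;> simp [h']
  have hAi : Integrable A μ := by
    refine Integrable.mono' (integrable_const (1:ℝ)) hAm.aestronglyMeasurable ?_
    exact Filter.Eventually.of_forall hAb
  have hABi : Integrable (fun ω => A ω * B ω) μ :=
    hBi.bdd_mul hAm.aestronglyMeasurable (Filter.Eventually.of_forall hAb)
  have hset := Kernel.indepFun_iff_measure_inter_preimage_eq_mul.mp h
  have haeq : ∀ q : ℚ, ∀ᵐ ω ∂μ,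
      condExpKernel μ (MeasurableSpace.comap X inferInstance) ω (A ⁻¹' {1} ∩ B ⁻¹' Set.Iic (q:ℝ))
        = condExpKernel μ (MeasurableSpace.comap X inferInstance) ω (A ⁻¹' {1}) * condExpKernel μ (MeasurableSpace.comap X inferInstance) ω (B ⁻¹' Set.Iic (q:ℝ)) :=
    fun q => ae_of_ae_trim hm
      (hset {1} (Set.Iic (q:ℝ)) (measurableSet_singleton 1) measurableSet_Iic)
  have hae : ∀ᵐ ω ∂μ, ∀ q : ℚ,
      condExpKernel μ (MeasurableSpace.comap X inferInstance) ω (A ⁻¹' {1} ∩ B ⁻¹' Set.Iic (q:ℝ))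
        = condExpKernel μ (MeasurableSpace.comap X inferInstance) ω (A ⁻¹' {1}) * condExpKernel μ (MeasurableSpace.comap X inferInstance) ω (B ⁻¹' Set.Iic (q:ℝ)) :=
    (ae_all_iff).mpr haeq
  have key : ∀ᵐ ω ∂μ, ∫ y, A y * B y ∂(condExpKernel μ (MeasurableSpace.comap X inferInstance) ω)
      = (∫ y, A y ∂(condExpKernel μ (MeasurableSpace.comap X inferInstance) ω)) * ∫ y, B y ∂(condExpKernel μ (MeasurableSpace.comap X inferInstance) ω) := by
    filter_upwards [hae] with ω hω
    set ν : Measure Ω := condExpKernel μ (MeasurableSpace.comap X inferInstance) ω with hν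
    haveI : IsProbabilityMeasure ν := by
      rw [hν]; infer_instance
    -- π-systems
    set p1 : Set (Set Ω) := {A ⁻¹' {1}} with hp1def
    set p2 : Set (Set Ω) := {s : Set Ω | ∃ t ∈ ⋃ a : ℚ, {Set.Iic (a:ℝ)}, B ⁻¹' t = s}
      with hp2def
    have hp1 : IsPiSystem p1 := by
      intro s hs t ht _
      rw [Set.mem_singleton_iff] at hs ht
      rw [hs, ht, Set.inter_self]
      exact rfl
    have hp2 : IsPiSystem p2 := Real.isPiSystem_Iic_rat.comap B
    have hgen2 : MeasurableSpace.comap B inferInstance = generateFrom p2 := by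
      have hb : (inferInstance : MeasurableSpace ℝ)
          = generateFrom (⋃ a : ℚ, {Set.Iic (a:ℝ)}) :=
        (BorelSpace.measurable_eq).trans Real.borel_eq_generateFrom_Iic_rat
      rw [hb, MeasurableSpace.comap_generateFrom]
      rfl
    have hgen1le : generateFrom p1 ≤ mΩ := by
      refine generateFrom_le ?_
      rintro s hs
      rw [Set.mem_singleton_iff] at hs
      rw [hs]
      exact hAm (measurableSet_singleton 1)
    have hsets : IndepSets p1 p2 ν := by
      rintro t1 t2 ht1 ⟨u, hu, rfl⟩
      rw [Set.mem_singleton_iff] at ht1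
      subst ht1
      simp only [Set.mem_iUnion, Set.mem_singleton_iff] at hu
      obtain ⟨q, rfl⟩ := hu
      refine Filter.Eventually.of_forall fun a => ?_
      simpa only [Kernel.const_apply] using hω q
    have hIndep : Indep (generateFrom p1) (MeasurableSpace.comap B inferInstance) ν :=
      IndepSets.indep hgen1le hBm.comap_le hp1 hp2 rfl hgen2 hsets
    have hle : MeasurableSpace.comap A inferInstance ≤ generateFrom p1 := by
      rintro s ⟨u, _, rfl⟩
      have hAmem : MeasurableSet[generateFrom p1] (A ⁻¹' {1}) :=
        measurableSet_generateFrom rfl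
      by_cases h1 : (1:ℝ) ∈ u <;> by_cases h0 : (0:ℝ) ∈ u
      · have : A ⁻¹' u = Set.univ := by
          ext ω'
          simp only [Set.mem_preimage, Set.mem_univ, iff_true]
          rcases hA01 ω' with h'|h' <;> rw [h'] <;> assumption
        rw [this]; exact @MeasurableSet.univ Ω (generateFrom p1)
      · have : A ⁻¹' u = A ⁻¹' {1} := by
          ext ω'
          simp only [Set.mem_preimage, Set.mem_singleton_iff]
          rcases hA01 ω' with h'|h' <;> rw [h'] <;> simp [h0, h1]
        rw [this]; exact hAmem
      · have : A ⁻¹' u = (A ⁻¹' {1})ᶜ := by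
          ext ω'
          simp only [Set.mem_preimage, Set.mem_compl_iff, Set.mem_singleton_iff]
          rcases hA01 ω' with h'|h' <;> rw [h'] <;> simp [h0, h1]
        rw [this]; exact hAmem.compl
      · have : A ⁻¹' u = ∅ := by
          ext ω'
          simp only [Set.mem_preimage, Set.mem_empty_iff_false, iff_false]
          rcases hA01 ω' with h'|h' <;> rw [h'] <;> assumption
        rw [this]; exact @MeasurableSet.empty Ω (generateFrom p1)
    have hIndepFun : IndepFun A B ν :=
      indep_of_indep_of_le_left hIndep hle
    have := IndepFun.integral_mul_eq_mul_integral hIndepFun hAm.aestronglyMeasurable hBm.aestronglyMeasurable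
    simpa [Pi.mul_apply] using this
  calc μ[fun ω => A ω * B ω|MeasurableSpace.comap X inferInstance]
      =ᵐ[μ] fun ω => ∫ y, A y * B y ∂(condExpKernel μ (MeasurableSpace.comap X inferInstance) ω) :=
        condExp_ae_eq_integral_condExpKernel hm hABi
    _ =ᵐ[μ] fun ω => (μ[A|MeasurableSpace.comap X inferInstance]) ω * (μ[B|MeasurableSpace.comap X inferInstance]) ω := by
        filter_upwards [key, condExp_ae_eq_integral_condExpKernel hm hAi,
          condExp_ae_eq_integral_condExpKernel hm hBi] with ω h1 h2 h3
        rw [h1, h2, h3]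

/-- GATE identification conditional on the key covariate and the propensity
score: under unconfoundedness and strict overlap, with `G = σ(Z, π(X))` where `Z = g ∘ X`,
one has `E[A | G] = π(X)` a.s. and
`E[Y1 − Y0 | σ(Z)] = E[ E[A·Y|G]/E[A|G] − E[(1−A)·Y|G]/E[(1−A)|G] | σ(Z) ]` a.s. -/
theorem gate_identification_via_z_and_ps
    {Ω : Type*} [MeasurableSpace Ω] [StandardBorelSpace Ω]
    {S : Type*} [MeasurableSpace S]
    (μ : Measure Ω) [IsProbabilityMeasure μ]
    (A : Ω → ℝ) (hAm : Measurable A) (hA01 : ∀ ω, A ω = 0 ∨ A ω = 1)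
    (X : Ω → S) (hXm : Measurable X)
    (Y0 Y1 : Ω → ℝ) (hY0m : Measurable Y0) (hY1m : Measurable Y1)
    (hY0i : Integrable Y0 μ) (hY1i : Integrable Y1 μ)
    (Y : Ω → ℝ) (hYdef : ∀ ω, Y ω = A ω * Y1 ω + (1 - A ω) * Y0 ω)
    (huncf : CondIndepFun (MeasurableSpace.comap X inferInstance) (hXm.comap_le)
      A (fun ω => (Y0 ω, Y1 ω)) μ)
    (π : S → ℝ) (hπm : Measurable π)
    (hπver : (fun ω => π (X ω)) =ᵐ[μ] μ[A | MeasurableSpace.comap X inferInstance])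
    (δ : ℝ) (hδ0 : 0 < δ) (hδhalf : δ < 1 / 2)
    (hover : ∀ᵐ ω ∂μ, δ ≤ π (X ω) ∧ π (X ω) ≤ 1 - δ)
    (g : S → ℝ) (hg : Measurable g) :
    (μ[A | MeasurableSpace.comap (fun ω => (g (X ω), π (X ω))) inferInstance]
        =ᵐ[μ] fun ω => π (X ω))
    ∧ (μ[fun ω => Y1 ω - Y0 ω | MeasurableSpace.comap (fun ω => g (X ω)) inferInstance]
        =ᵐ[μ]
      μ[fun ω =>
          (μ[fun ω' => A ω' * Y ω'
              | MeasurableSpace.comap (fun ω'' => (g (X ω''), π (X ω''))) inferInstance]) ω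
            / (μ[A | MeasurableSpace.comap (fun ω'' => (g (X ω''), π (X ω''))) inferInstance]) ω
          - (μ[fun ω' => (1 - A ω') * Y ω'
              | MeasurableSpace.comap (fun ω'' => (g (X ω''), π (X ω''))) inferInstance]) ω
            / (μ[fun ω' => 1 - A ω'
              | MeasurableSpace.comap (fun ω'' => (g (X ω''), π (X ω''))) inferInstance]) ω
        | MeasurableSpace.comap (fun ω => g (X ω)) inferInstance]) := by
  have hWm : Measurable fun ω => (g (X ω), π (X ω)) := (hg.comp hXm).prodMk (hπm.comp hXm)
  have hZm : Measurable fun ω => g (X ω) := hg.comp hXm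
  have hX : MeasurableSpace.comap X inferInstance ≤ ‹MeasurableSpace Ω› := hXm.comap_le
  have hG : MeasurableSpace.comap (fun ω => (g (X ω), π (X ω))) inferInstance ≤ ‹MeasurableSpace Ω› := hWm.comap_le
  have hZ : MeasurableSpace.comap (fun ω => g (X ω)) inferInstance ≤ ‹MeasurableSpace Ω› := hZm.comap_le
  have hGX : MeasurableSpace.comap (fun ω => (g (X ω), π (X ω))) inferInstance ≤ MeasurableSpace.comap X inferInstance := by
    have h1 : MeasurableSpace.comap (fun ω => (g (X ω), π (X ω))) inferInstance = MeasurableSpace.comap X (MeasurableSpace.comap (fun s => (g s, π s)) inferInstance) :=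
      (MeasurableSpace.comap_comp (f := fun s => (g s, π s)) (g := X)).symm
    rw [h1]
    exact MeasurableSpace.comap_mono (hg.prodMk hπm).comap_le
  have hZG : MeasurableSpace.comap (fun ω => g (X ω)) inferInstance ≤ MeasurableSpace.comap (fun ω => (g (X ω), π (X ω))) inferInstance := by
    have h1 : MeasurableSpace.comap (fun ω => g (X ω)) inferInstance = MeasurableSpace.comap (fun ω => (g (X ω), π (X ω))) (MeasurableSpace.comap Prod.fst inferInstance) :=
      (MeasurableSpace.comap_comp (f := Prod.fst) (g := fun ω => (g (X ω), π (X ω)))).symm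
    rw [h1]
    exact MeasurableSpace.comap_mono measurable_fst.comap_le
  have hWmG : Measurable[MeasurableSpace.comap (fun ω => (g (X ω), π (X ω))) inferInstance] (fun ω => (g (X ω), π (X ω))) := Measurable.of_comap_le le_rfl
  have hπXmG : Measurable[MeasurableSpace.comap (fun ω => (g (X ω), π (X ω))) inferInstance] (fun ω => π (X ω)) := measurable_snd.comp hWmG
  have hsm : StronglyMeasurable[MeasurableSpace.comap (fun ω => (g (X ω), π (X ω))) inferInstance] (fun ω => π (X ω)) := hπXmG.stronglyMeasurable
  have hAb : ∀ ω, ‖A ω‖ ≤ 1 := by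
    intro ω; rcases hA01 ω with h'|h' <;> simp [h']
  have hAi : Integrable A μ := by
    refine Integrable.mono' (integrable_const (1:ℝ)) hAm.aestronglyMeasurable ?_
    exact Filter.Eventually.of_forall hAb
  have hπXi : Integrable (fun ω => π (X ω)) μ := integrable_condExp.congr hπver.symm
  have hπXb : ∀ᵐ ω ∂μ, ‖π (X ω)‖ ≤ 1 := by
    filter_upwards [hover] with ω h
    rw [Real.norm_eq_abs, abs_le]
    constructor <;> [linarith [h.1]; linarith [h.2]]
  have h1πXb : ∀ᵐ ω ∂μ, ‖1 - π (X ω)‖ ≤ 1 := by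
    filter_upwards [hover] with ω h
    rw [Real.norm_eq_abs, abs_le]
    constructor <;> [linarith [h.2]; linarith [h.1]]
  have e0 : μ[(fun ω => π (X ω))|MeasurableSpace.comap (fun ω => (g (X ω), π (X ω))) inferInstance] = fun ω => π (X ω) := condExp_of_stronglyMeasurable hG hsm hπXi
  have part1 : μ[A | MeasurableSpace.comap (fun ω => (g (X ω), π (X ω))) inferInstance] =ᵐ[μ] fun ω => π (X ω) := by
    have h1 : μ[fun ω => π (X ω)|MeasurableSpace.comap (fun ω => (g (X ω), π (X ω))) inferInstance] =ᵐ[μ] μ[A|MeasurableSpace.comap (fun ω => (g (X ω), π (X ω))) inferInstance] := (condExp_congr_ae hπver).trans (condExp_condExp_of_le hGX hX)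
    refine h1.symm.trans ?_
    rw [e0]
  have part1' : μ[fun ω => 1 - A ω|MeasurableSpace.comap (fun ω => (g (X ω), π (X ω))) inferInstance] =ᵐ[μ] fun ω => 1 - π (X ω) := by
    have h2 : (fun ω => (1:ℝ) - A ω) = (fun _ => (1:ℝ)) - A := rfl
    rw [h2]
    refine (condExp_sub (integrable_const 1) hAi _).trans ?_
    filter_upwards [part1] with ω hω
    rw [Pi.sub_apply, condExp_const hG, hω]
  have hcomp1 : CondIndepFun (MeasurableSpace.comap X inferInstance) hXm.comap_le A Y1 μ := huncf.comp measurable_id measurable_snd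
  have h1A01 : ∀ ω, 1 - A ω = 0 ∨ 1 - A ω = 1 := by
    intro ω; rcases hA01 ω with h|h <;> simp [h]
  have h1Am : Measurable fun ω => 1 - A ω := measurable_const.sub hAm
  have hcomp0 : CondIndepFun (MeasurableSpace.comap X inferInstance) hXm.comap_le (fun ω => 1 - A ω) Y0 μ := huncf.comp (measurable_const.sub measurable_id) measurable_fst
  have hAY1 := condIndep_condexp_mul μ hAm hA01 hY1m hY1i X hXm hcomp1
  have h1AY0 := condIndep_condexp_mul μ h1Am h1A01 hY0m hY0i X hXm hcomp0
  have hπ1X : μ[fun ω => 1 - A ω|MeasurableSpace.comap X inferInstance] =ᵐ[μ] fun ω => 1 - π (X ω) := by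
    have h2 : (fun ω => (1:ℝ) - A ω) = (fun _ => (1:ℝ)) - A := rfl
    rw [h2]
    refine (condExp_sub (integrable_const 1) hAi _).trans ?_
    filter_upwards [hπver] with ω hω
    rw [Pi.sub_apply, condExp_const hX, ← hω]
  have hAYfun : (fun ω => A ω * Y ω) = fun ω => A ω * Y1 ω := by
    funext ω; rcases hA01 ω with h|h <;> rw [hYdef ω, h] <;> ring
  have h1AYfun : (fun ω => (1 - A ω) * Y ω) = fun ω => (1 - A ω) * Y0 ω := by
    funext ω; rcases hA01 ω with h|h <;> rw [hYdef ω, h] <;> ring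
  have hAYG : μ[fun ω => A ω * Y ω|MeasurableSpace.comap (fun ω => (g (X ω), π (X ω))) inferInstance] =ᵐ[μ] fun ω => π (X ω) * (μ[Y1|MeasurableSpace.comap (fun ω => (g (X ω), π (X ω))) inferInstance]) ω := by
    rw [hAYfun]
    have s1 : μ[fun ω => A ω * Y1 ω|MeasurableSpace.comap (fun ω => (g (X ω), π (X ω))) inferInstance] =ᵐ[μ] μ[μ[fun ω => A ω * Y1 ω|MeasurableSpace.comap X inferInstance]|MeasurableSpace.comap (fun ω => (g (X ω), π (X ω))) inferInstance] := (condExp_condExp_of_le hGX hX).symm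
    have s2 : μ[μ[fun ω => A ω * Y1 ω|MeasurableSpace.comap X inferInstance]|MeasurableSpace.comap (fun ω => (g (X ω), π (X ω))) inferInstance] =ᵐ[μ] μ[fun ω => π (X ω) * (μ[Y1|MeasurableSpace.comap X inferInstance]) ω|MeasurableSpace.comap (fun ω => (g (X ω), π (X ω))) inferInstance] := by
      refine condExp_congr_ae ?_
      filter_upwards [hAY1, hπver] with ω h1 h2
      rw [h1, ← h2]
    have s3 : μ[fun ω => π (X ω) * (μ[Y1|MeasurableSpace.comap X inferInstance]) ω|MeasurableSpace.comap (fun ω => (g (X ω), π (X ω))) inferInstance] =ᵐ[μ] fun ω => π (X ω) * (μ[μ[Y1|MeasurableSpace.comap X inferInstance]|MeasurableSpace.comap (fun ω => (g (X ω), π (X ω))) inferInstance]) ω := condExp_stronglyMeasurable_mul_of_bound₀ hG hsm.aestronglyMeasurable integrable_condExp 1 hπXb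
    have s4 : (fun ω => π (X ω) * (μ[μ[Y1|MeasurableSpace.comap X inferInstance]|MeasurableSpace.comap (fun ω => (g (X ω), π (X ω))) inferInstance]) ω) =ᵐ[μ] fun ω => π (X ω) * (μ[Y1|MeasurableSpace.comap (fun ω => (g (X ω), π (X ω))) inferInstance]) ω := by
      filter_upwards [condExp_condExp_of_le hGX hX (f := Y1)] with ω hω
      rw [hω]
    exact ((s1.trans s2).trans s3).trans s4
  have h1AYG : μ[fun ω => (1 - A ω) * Y ω|MeasurableSpace.comap (fun ω => (g (X ω), π (X ω))) inferInstance] =ᵐ[μ] fun ω => (1 - π (X ω)) * (μ[Y0|MeasurableSpace.comap (fun ω => (g (X ω), π (X ω))) inferInstance]) ω := by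
    rw [h1AYfun]
    have s1 : μ[fun ω => (1 - A ω) * Y0 ω|MeasurableSpace.comap (fun ω => (g (X ω), π (X ω))) inferInstance] =ᵐ[μ] μ[μ[fun ω => (1 - A ω) * Y0 ω|MeasurableSpace.comap X inferInstance]|MeasurableSpace.comap (fun ω => (g (X ω), π (X ω))) inferInstance] := (condExp_condExp_of_le hGX hX).symm
    have s2 : μ[μ[fun ω => (1 - A ω) * Y0 ω|MeasurableSpace.comap X inferInstance]|MeasurableSpace.comap (fun ω => (g (X ω), π (X ω))) inferInstance] =ᵐ[μ] μ[fun ω => (1 - π (X ω)) * (μ[Y0|MeasurableSpace.comap X inferInstance]) ω|MeasurableSpace.comap (fun ω => (g (X ω), π (X ω))) inferInstance] := by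
      refine condExp_congr_ae ?_
      filter_upwards [h1AY0, hπ1X] with ω h1 h2
      rw [h1, h2]
    have s3 : μ[fun ω => (1 - π (X ω)) * (μ[Y0|MeasurableSpace.comap X inferInstance]) ω|MeasurableSpace.comap (fun ω => (g (X ω), π (X ω))) inferInstance] =ᵐ[μ] fun ω => (1 - π (X ω)) * (μ[μ[Y0|MeasurableSpace.comap X inferInstance]|MeasurableSpace.comap (fun ω => (g (X ω), π (X ω))) inferInstance]) ω := condExp_stronglyMeasurable_mul_of_bound₀ hG (stronglyMeasurable_const.sub hsm).aestronglyMeasurable integrable_condExp 1 h1πXb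
    have s4 : (fun ω => (1 - π (X ω)) * (μ[μ[Y0|MeasurableSpace.comap X inferInstance]|MeasurableSpace.comap (fun ω => (g (X ω), π (X ω))) inferInstance]) ω) =ᵐ[μ] fun ω => (1 - π (X ω)) * (μ[Y0|MeasurableSpace.comap (fun ω => (g (X ω), π (X ω))) inferInstance]) ω := by
      filter_upwards [condExp_condExp_of_le hGX hX (f := Y0)] with ω hω
      rw [hω]
    exact ((s1.trans s2).trans s3).trans s4
  refine ⟨part1, ?_⟩
  have hsubG : μ[fun ω => Y1 ω - Y0 ω|MeasurableSpace.comap (fun ω => (g (X ω), π (X ω))) inferInstance] =ᵐ[μ] fun ω => (μ[Y1|MeasurableSpace.comap (fun ω => (g (X ω), π (X ω))) inferInstance]) ω - (μ[Y0|MeasurableSpace.comap (fun ω => (g (X ω), π (X ω))) inferInstance]) ω := by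
    have h2 : (fun ω => Y1 ω - Y0 ω) = Y1 - Y0 := rfl
    rw [h2]
    exact condExp_sub hY1i hY0i _
  have hF : (fun ω => (μ[fun ω' => A ω' * Y ω' | MeasurableSpace.comap (fun ω'' => (g (X ω''), π (X ω''))) inferInstance]) ω / (μ[A | MeasurableSpace.comap (fun ω'' => (g (X ω''), π (X ω''))) inferInstance]) ω - (μ[fun ω' => (1 - A ω') * Y ω' | MeasurableSpace.comap (fun ω'' => (g (X ω''), π (X ω''))) inferInstance]) ω / (μ[fun ω' => 1 - A ω' | MeasurableSpace.comap (fun ω'' => (g (X ω''), π (X ω''))) inferInstance]) ω) =ᵐ[μ] μ[fun ω => Y1 ω - Y0 ω|MeasurableSpace.comap (fun ω => (g (X ω), π (X ω))) inferInstance] := by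
    filter_upwards [hAYG, h1AYG, part1, part1', hover, hsubG] with ω e1 e2 e3 e4 e5 e6
    have hπ0 : π (X ω) ≠ 0 := ne_of_gt (lt_of_lt_of_le hδ0 e5.1)
    have hπ1 : 1 - π (X ω) ≠ 0 := ne_of_gt (by linarith [e5.2])
    rw [e1, e2, e3, e4, e6, mul_div_cancel_left₀ _ hπ0, mul_div_cancel_left₀ _ hπ1]
  exact (condExp_condExp_of_le hZG hG).symm.trans (condExp_congr_ae hF.symm)
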